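/- Let Γ be a finite connected bipartite graph with ordered bipartition (B|B') such that the adjacency design D(Γ) is affine, and let G ≤ Aut(Γ) fix B and B' setwise. Then the following are equivalent: (i) G is transitive on B and on B' and, for every vertex x of Γ and every 1 ≤ i ≤ 4, the stabiliser G_x is transitive on the set Γ_i(x) of vertices at distance i from x (a condition vacuous when Γ_i(x) is empty); (ii) D(Γ) is G-pairwise transitive. -/

import Mathlib

open SimpleGraph

section Prelude

variable {V : Type*}

/-- `g` is an automorphism of the graph `Γ`. -/
def IsGraphAut (Γ : SimpleGraph V) (g : Equiv.Perm V) : Prop :=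
  ∀ u v : V, Γ.Adj (g u) (g v) ↔ Γ.Adj u v

/-- `(B | Bᶜ)` is an (ordered) bipartition of `Γ`: every edge joins `B` and `Bᶜ`. -/
def IsBipartition (Γ : SimpleGraph V) (B : Set V) : Prop :=
  ∀ u v : V, Γ.Adj u v → (u ∈ B ↔ v ∉ B)

/-- The orbit of `x` under a subgroup `N` of permutations of `V`. -/
def POrbit (N : Subgroup (Equiv.Perm V)) (x : V) : Set V :=
  {y | ∃ n ∈ N, n x = y}

/-- `Γ` is locally `(G,s)`-distance transitive: the diameter is at least `s` and for
every vertex `v` and every `1 ≤ i ≤ s` the stabiliser of `v` in `G` is transitive on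
the set of vertices at distance `i` from `v`. -/
def LocallyDistTrans (Γ : SimpleGraph V) (G : Subgroup (Equiv.Perm V)) (s : ℕ) : Prop :=
  s ≤ Γ.diam ∧
    ∀ (v x y : V) (i : ℕ), 1 ≤ i → i ≤ s → Γ.dist v x = i → Γ.dist v y = i →
      ∃ g ∈ G, g v = v ∧ g x = y

/-- `Γ`, bipartite with ordered bipartition `(B | Bᶜ)`, is `r`-starlike relative to `N`:
`N` leaves `B` invariant, is transitive on `B`, and has exactly `r` orbits on `Bᶜ`. -/
def IsStarlike (Γ : SimpleGraph V) (B : Set V) (N : Subgroup (Equiv.Perm V)) (r : ℕ) : Prop :=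
  (∀ n ∈ N, ∀ v : V, n v ∈ B ↔ v ∈ B) ∧
    (∀ x ∈ B, ∀ y ∈ B, ∃ n ∈ N, n x = y) ∧
    {S : Set V | ∃ x ∈ Bᶜ, S = POrbit N x}.ncard = r

/-- `G` is transitive on the set `S` of (ordered) pairs. -/
def PairTrans (G : Subgroup (Equiv.Perm V)) (S : Set (V × V)) : Prop :=
  ∀ p ∈ S, ∀ q ∈ S, ∃ g ∈ G, g p.1 = q.1 ∧ g p.2 = q.2

/-- The adjacency design of the bipartite graph `Γ` with ordered bipartition `(B | Bᶜ)`
(points `B`, blocks `Bᶜ`, incidence = adjacency) is `G`-pairwise transitive. -/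
def AdjPT (Γ : SimpleGraph V) (B : Set V) (G : Subgroup (Equiv.Perm V)) : Prop :=
  (∀ g ∈ G, ∀ v : V, g v ∈ B ↔ v ∈ B) ∧
  PairTrans G {p | p.1 ∈ B ∧ p.2 ∈ Bᶜ ∧ Γ.Adj p.1 p.2} ∧
  PairTrans G {p | p.1 ∈ B ∧ p.2 ∈ Bᶜ ∧ ¬ Γ.Adj p.1 p.2} ∧
  PairTrans G {p | p.1 ∈ B ∧ p.2 ∈ B ∧ p.1 ≠ p.2 ∧ ∃ b ∈ Bᶜ, Γ.Adj p.1 b ∧ Γ.Adj p.2 b} ∧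
  PairTrans G {p | p.1 ∈ B ∧ p.2 ∈ B ∧ p.1 ≠ p.2 ∧ ¬ ∃ b ∈ Bᶜ, Γ.Adj p.1 b ∧ Γ.Adj p.2 b} ∧
  PairTrans G {p | p.1 ∈ Bᶜ ∧ p.2 ∈ Bᶜ ∧ p.1 ≠ p.2 ∧ ∃ x ∈ B, Γ.Adj x p.1 ∧ Γ.Adj x p.2} ∧
  PairTrans G {p | p.1 ∈ Bᶜ ∧ p.2 ∈ Bᶜ ∧ p.1 ≠ p.2 ∧ ¬ ∃ x ∈ B, Γ.Adj x p.1 ∧ Γ.Adj x p.2}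

/-- The adjacency design of `Γ` (points `B`, blocks `Bᶜ`) is `N`-nicely affine:
`N` acts as automorphisms preserving the biparts, transitively on points, and there is a
constant `μ` such that distinct blocks in different `N`-orbits have exactly `μ` common
points, while distinct blocks in the same `N`-orbit have no common point. -/
def AdjNA (Γ : SimpleGraph V) (B : Set V) (N : Subgroup (Equiv.Perm V)) : Prop :=
  (∀ n ∈ N, ∀ v : V, n v ∈ B ↔ v ∈ B) ∧
  (∀ x ∈ B, ∀ y ∈ B, ∃ n ∈ N, n x = y) ∧
  ∃ μ : ℕ, ∀ b ∈ Bᶜ, ∀ b' ∈ Bᶜ, b ≠ b' →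
    ((b' ∈ POrbit N b → ¬ ∃ x, Γ.Adj x b ∧ Γ.Adj x b') ∧
     (b' ∉ POrbit N b → {x | Γ.Adj x b ∧ Γ.Adj x b'}.ncard = μ))

/-- The adjacency design of `Γ` (points `B`, blocks `Bᶜ`) is affine: the blocks can be
partitioned into parallel classes, and there is a positive constant `μ` such that blocks
in distinct parallel classes have exactly `μ` common points. -/
def AdjAffine (Γ : SimpleGraph V) (B : Set V) : Prop :=
  ∃ 𝓒 : Set (Set V), (∀ C ∈ 𝓒, C ⊆ Bᶜ) ∧ (∀ b ∈ Bᶜ, ∃! C, C ∈ 𝓒 ∧ b ∈ C) ∧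
    (∀ C ∈ 𝓒, ∀ x ∈ B, ∃! b, b ∈ C ∧ Γ.Adj x b) ∧
    ∃ μ : ℕ, 0 < μ ∧ ∀ C ∈ 𝓒, ∀ C' ∈ 𝓒, C ≠ C' → ∀ b ∈ C, ∀ b' ∈ C',
      {x | Γ.Adj x b ∧ Γ.Adj x b'}.ncard = μ

end Prelude

section DesignPrelude

variable {P L : Type*}

/-- The design `(P, L, I)` is `G`-pairwise transitive. -/
def DesignPT (I : P → L → Prop) (G : Type*) [Group G] [MulAction G P] [MulAction G L] :
    Prop :=
  (∀ (x : P) (b : L) (x' : P) (b' : L), I x b → I x' b' →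
      ∃ g : G, g • x = x' ∧ g • b = b') ∧
  (∀ (x : P) (b : L) (x' : P) (b' : L), ¬ I x b → ¬ I x' b' →
      ∃ g : G, g • x = x' ∧ g • b = b') ∧
  (∀ x y x' y' : P, x ≠ y → x' ≠ y' → (∃ b, I x b ∧ I y b) → (∃ b, I x' b ∧ I y' b) →
      ∃ g : G, g • x = x' ∧ g • y = y') ∧
  (∀ x y x' y' : P, x ≠ y → x' ≠ y' → ¬ (∃ b, I x b ∧ I y b) → ¬ (∃ b, I x' b ∧ I y' b) →
      ∃ g : G, g • x = x' ∧ g • y = y') ∧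
  (∀ b c b' c' : L, b ≠ c → b' ≠ c' → (∃ x, I x b ∧ I x c) → (∃ x, I x b' ∧ I x c') →
      ∃ g : G, g • b = b' ∧ g • c = c') ∧
  (∀ b c b' c' : L, b ≠ c → b' ≠ c' → ¬ (∃ x, I x b ∧ I x c) → ¬ (∃ x, I x b' ∧ I x c') →
      ∃ g : G, g • b = b' ∧ g • c = c')

/-- The design `(P, L, I)` is `N`-nicely affine for the subgroup `N` of `G`. -/
def DesignNA (I : P → L → Prop) (G : Type*) [Group G] [MulAction G P] [MulAction G L]
    (N : Subgroup G) : Prop :=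
  (∀ x y : P, ∃ n ∈ N, n • x = y) ∧
  ∃ μ : ℕ, ∀ b b' : L, b ≠ b' →
    (((∃ n ∈ N, n • b = b') → ¬ ∃ x, I x b ∧ I x b') ∧
     ((¬ ∃ n ∈ N, n • b = b') → {x | I x b ∧ I x b'}.ncard = μ))

/-- The incidence graph of the design `(P, L, I)`. -/
def DIncGraph (I : P → L → Prop) : SimpleGraph (P ⊕ L) :=
  SimpleGraph.fromRel (fun a b => ∃ x s, a = Sum.inl x ∧ b = Sum.inr s ∧ I x s)

end DesignPrelude

section SetDesign

variable {V : Type*}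

/-- Pairwise transitivity for a design whose points are the elements of `V`, whose
blocks are the members of `𝓑` (identified with their point-sets) and whose
incidence relation is membership; `G` is a group of permutations of `V`. -/
def SetPT (𝓑 : Set (Set V)) (G : Subgroup (Equiv.Perm V)) : Prop :=
  (∀ x : V, ∀ s ∈ 𝓑, ∀ x' : V, ∀ s' ∈ 𝓑, x ∈ s → x' ∈ s' →
      ∃ g ∈ G, g x = x' ∧ (fun z => g z) '' s = s') ∧
  (∀ x : V, ∀ s ∈ 𝓑, ∀ x' : V, ∀ s' ∈ 𝓑, x ∉ s → x' ∉ s' →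
      ∃ g ∈ G, g x = x' ∧ (fun z => g z) '' s = s') ∧
  (∀ x y x' y' : V, x ≠ y → x' ≠ y' → (∃ s ∈ 𝓑, x ∈ s ∧ y ∈ s) → (∃ s ∈ 𝓑, x' ∈ s ∧ y' ∈ s) →
      ∃ g ∈ G, g x = x' ∧ g y = y') ∧
  (∀ x y x' y' : V, x ≠ y → x' ≠ y' → ¬ (∃ s ∈ 𝓑, x ∈ s ∧ y ∈ s) → ¬ (∃ s ∈ 𝓑, x' ∈ s ∧ y' ∈ s) →
      ∃ g ∈ G, g x = x' ∧ g y = y') ∧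
  (∀ s ∈ 𝓑, ∀ t ∈ 𝓑, ∀ s' ∈ 𝓑, ∀ t' ∈ 𝓑, s ≠ t → s' ≠ t' →
      (s ∩ t).Nonempty → (s' ∩ t').Nonempty →
      ∃ g ∈ G, (fun z => g z) '' s = s' ∧ (fun z => g z) '' t = t') ∧
  (∀ s ∈ 𝓑, ∀ t ∈ 𝓑, ∀ s' ∈ 𝓑, ∀ t' ∈ 𝓑, s ≠ t → s' ≠ t' →
      s ∩ t = ∅ → s' ∩ t' = ∅ →
      ∃ g ∈ G, (fun z => g z) '' s = s' ∧ (fun z => g z) '' t = t')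

/-- Nice affineness for a design with point set `V`, blocks `𝓑` (point-sets) and
incidence given by membership, relative to a permutation group `N`. -/
def SetNA (𝓑 : Set (Set V)) (N : Subgroup (Equiv.Perm V)) : Prop :=
  (∀ x y : V, ∃ n ∈ N, n x = y) ∧
  (∀ n ∈ N, ∀ s ∈ 𝓑, (fun z => n z) '' s ∈ 𝓑) ∧
  ∃ μ : ℕ, ∀ s ∈ 𝓑, ∀ s' ∈ 𝓑, s ≠ s' →
    (((∃ n ∈ N, (fun z => n z) '' s = s') → s ∩ s' = ∅) ∧
     ((¬ ∃ n ∈ N, (fun z => n z) '' s = s') → (s ∩ s').ncard = μ))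

end SetDesign

section QuotientGraph

variable {V : Type*}

/-- The setoid on vertices whose classes are the `N`-orbits. -/
def orbitSetoid (N : Subgroup (Equiv.Perm V)) : Setoid V where
  r x y := ∃ n ∈ N, n x = y
  iseqv := by
    refine ⟨fun x => ⟨1, N.one_mem, rfl⟩, ?_, ?_⟩
    · rintro x y ⟨n, hn, rfl⟩
      exact ⟨n⁻¹, N.inv_mem hn, by simp⟩
    · rintro x y z ⟨n, hn, rfl⟩ ⟨m, hm, rfl⟩
      exact ⟨m * n, N.mul_mem hm hn, rfl⟩

/-- The normal quotient graph `Γ_N`: vertices are the `N`-orbits, two distinct orbits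
being adjacent iff some vertex of one is adjacent to some vertex of the other. -/
def quotGraph (Γ : SimpleGraph V) (N : Subgroup (Equiv.Perm V)) :
    SimpleGraph (Quotient (orbitSetoid N)) :=
  SimpleGraph.fromRel (fun a b => ∃ x y : V, Γ.Adj x y ∧
    Quotient.mk (orbitSetoid N) x = a ∧ Quotient.mk (orbitSetoid N) y = b)

end QuotientGraph

section Subdivision

variable {W : Type*}

/-- The subdivision graph `S(Σ)` of a graph `Σ`: vertices are `EΣ ⊕ VΣ`, an edge
being adjacent to its endpoints. -/
def SubdivisionGraph (Sg : SimpleGraph W) : SimpleGraph (↥Sg.edgeSet ⊕ W) :=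
  SimpleGraph.fromRel (fun a b => ∃ (e : Sg.edgeSet) (w : W),
    a = Sum.inl e ∧ b = Sum.inr w ∧ w ∈ (e : Sym2 W))

/-- The graph on `B'` in which two vertices are adjacent iff they are at distance `2`
in `Γ`. -/
def distTwoGraph (Γ : SimpleGraph W) (B' : Set W) : SimpleGraph ↥B' where
  Adj a b := Γ.dist ↑a ↑b = 2
  symm := by
    refine ⟨fun a b (h : Γ.dist ↑a ↑b = 2) => (?_ : Γ.dist ↑b ↑a = 2)⟩
    rwa [SimpleGraph.dist_comm]
  loopless := by
    refine ⟨fun a (h : Γ.dist ↑a ↑a = 2) => ?_⟩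
    simp [SimpleGraph.dist_self] at h

/-- `f 0, f 1, …, f t` is a `t`-arc of `Sg`. -/
def IsArcOf (Sg : SimpleGraph W) (t : ℕ) (f : ℕ → W) : Prop :=
  (∀ i : ℕ, i < t → Sg.Adj (f i) (f (i + 1))) ∧
  (∀ i : ℕ, 1 ≤ i → i + 1 ≤ t → f (i - 1) ≠ f (i + 1))

end Subdivision

section AuxPT

variable {V : Type*} {Γ : SimpleGraph V} {B : Set V}

private lemma aux_parity (hbip : IsBipartition Γ B) :
    ∀ {u v : V} (p : Γ.Walk u v), ((u ∈ B) ↔ (v ∈ B)) ↔ Even p.length := by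
  intro u v p
  induction p with
  | nil => simp
  | @cons u w v h p ih =>
    have hb := hbip u w h
    simp only [SimpleGraph.Walk.length_cons, Nat.even_add_one, ← ih]
    tauto

private lemma aux_dist_parity (hconn : Γ.Connected) (hbip : IsBipartition Γ B) (u v : V) :
    ((u ∈ B) ↔ (v ∈ B)) ↔ Even (Γ.dist u v) := by
  obtain ⟨p, hp⟩ := SimpleGraph.Connected.exists_walk_length_eq_dist hconn u v
  rw [← hp]
  exact aux_parity hbip p

private lemma aux_aut_dist_le (hconn : Γ.Connected) {g : Equiv.Perm V}
    (hg : IsGraphAut Γ g) (u v : V) : Γ.dist (g u) (g v) ≤ Γ.dist u v := by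
  obtain ⟨p, hp⟩ := SimpleGraph.Connected.exists_walk_length_eq_dist hconn u v
  let f : Γ →g Γ := ⟨fun z => g z, fun {a b} h => (hg a b).mpr h⟩
  calc Γ.dist (g u) (g v) ≤ (p.map f).length := SimpleGraph.dist_le _
    _ = Γ.dist u v := by rw [SimpleGraph.Walk.length_map, hp]

private lemma aux_aut_dist (hconn : Γ.Connected) {g : Equiv.Perm V}
    (hg : IsGraphAut Γ g) (u v : V) : Γ.dist (g u) (g v) = Γ.dist u v := by
  have hg' : IsGraphAut Γ g⁻¹ := by
    intro a b
    simpa using (hg (g⁻¹ a) (g⁻¹ b)).symm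
  refine le_antisymm (aux_aut_dist_le hconn hg u v) ?_
  have := aux_aut_dist_le hconn hg' (g u) (g v)
  simpa using this

private lemma aux_dist_two {u v : V} (h : Γ.dist u v = 2) :
    ∃ w, Γ.Adj u w ∧ Γ.Adj w v := by
  obtain ⟨p, hp⟩ := SimpleGraph.exists_walk_of_dist_ne_zero (by omega : Γ.dist u v ≠ 0)
  rw [h] at hp
  cases p with
  | nil => simp at hp
  | cons h1 q =>
    cases q with
    | nil => simp at hp
    | cons h2 r =>
      have hr : r.length = 0 := by
        simp only [SimpleGraph.Walk.length_cons] at hp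
        omega
      have := SimpleGraph.Walk.eq_of_length_eq_zero hr
      subst this
      exact ⟨_, h1, h2⟩

end AuxPT

/-- **Proposition `4dist=PT`**.  Let `Γ` be a finite connected bipartite graph with
ordered bipartition `(B|Bᶜ)` whose adjacency design is affine, and let `G ≤ Aut Γ` fix
`B` and `Bᶜ` setwise.  Then `Γ` is locally `(G,4)`-distance transitive in the weak sense
(G transitive on each bipart and each vertex stabiliser transitive on each nonempty
distance-`i` set, `1 ≤ i ≤ 4`) if and only if `D(Γ)` is `G`-pairwise transitive. -/
theorem statement10 {V : Type*} [Fintype V] (Γ : SimpleGraph V) (B : Set V)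
    (hconn : Γ.Connected) (hbip : IsBipartition Γ B)
    (G : Subgroup (Equiv.Perm V)) (hGaut : ∀ g ∈ G, IsGraphAut Γ g)
    (hGB : ∀ g ∈ G, ∀ v : V, g v ∈ B ↔ v ∈ B)
    (haff : AdjAffine Γ B) :
    ((∀ x ∈ B, ∀ y ∈ B, ∃ g ∈ G, g x = y) ∧
      (∀ x ∈ Bᶜ, ∀ y ∈ Bᶜ, ∃ g ∈ G, g x = y) ∧
      (∀ (x y z : V) (i : ℕ), 1 ≤ i → i ≤ 4 → Γ.dist x y = i → Γ.dist x z = i →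
        ∃ g ∈ G, g x = x ∧ g y = z)) ↔
    AdjPT Γ B G := by
  classical
  obtain ⟨𝓒, hCsub, hCuniq, hCcov, μ, hμpos, hμ⟩ := haff
  -- basic bipartiteness facts
  have hadjB : ∀ {u w : V}, u ∈ B → Γ.Adj u w → w ∈ Bᶜ := by
    intro u w hu h
    exact (hbip u w h).mp hu
  have hadjC : ∀ {u w : V}, u ∈ Bᶜ → Γ.Adj u w → w ∈ B := by
    intro u w hu h
    by_contra hw
    exact hu ((hbip u w h).mpr hw)
  have hnoBB : ∀ {u w : V}, u ∈ B → w ∈ B → ¬ Γ.Adj u w := by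
    intro u w hu hw h
    exact (hbip u w h).mp hu hw
  have hnoCC : ∀ {u w : V}, u ∈ Bᶜ → w ∈ Bᶜ → ¬ Γ.Adj u w := by
    intro u w hu hw h
    exact hu ((hbip u w h).mpr hw)
  have hnbr : ∀ u v : V, u ≠ v → ∃ w, Γ.Adj u w := by
    intro u v hne
    refine (hconn u v).elim fun p => ?_
    cases p with
    | nil => exact absurd rfl hne
    | cons h _ => exact ⟨_, h⟩
  have hdist2 : ∀ u w v : V, u ≠ v → ¬ Γ.Adj u v → Γ.Adj u w → Γ.Adj w v → Γ.dist u v = 2 := by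
    intro u w v hne hna h1 h2
    have hle := SimpleGraph.dist_le (SimpleGraph.Walk.cons h1 (SimpleGraph.Walk.cons h2 SimpleGraph.Walk.nil))
    simp only [SimpleGraph.Walk.length_cons, SimpleGraph.Walk.length_nil] at hle
    have h0 : Γ.dist u v ≠ 0 := fun h => hne (hconn.dist_eq_zero_iff.mp h)
    have h1' : Γ.dist u v ≠ 1 := fun h => hna (SimpleGraph.dist_eq_one_iff_adj.mp h)
    omega
  -- single parallel class forces a star
  have hsingle : ∀ C ∈ 𝓒, (∀ C' ∈ 𝓒, C' = C) → ∀ b₀ ∈ Bᶜ, ∀ v : V, v = b₀ ∨ Γ.Adj v b₀ := by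
    intro C hC hone b₀ hb₀
    have honly : ∀ z ∈ B, ∀ w w' : V, Γ.Adj z w → Γ.Adj z w' → w = w' := by
      intro z hz w w' hw hw'
      obtain ⟨Cw, ⟨hCw, hwCw⟩, -⟩ := hCuniq w (hadjB hz hw)
      obtain ⟨Cw', ⟨hCw', hw'Cw'⟩, -⟩ := hCuniq w' (hadjB hz hw')
      obtain ⟨b, -, hbu⟩ := hCcov C hC z hz
      have e1 : w = b := hbu w ⟨(hone Cw hCw) ▸ hwCw, hw⟩
      have e2 : w' = b := hbu w' ⟨(hone Cw' hCw') ▸ hw'Cw', hw'⟩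
      rw [e1, e2]
    have key : ∀ (u v : V) (p : Γ.Walk u v),
        (u = b₀ ∨ Γ.Adj u b₀) → (v = b₀ ∨ Γ.Adj v b₀) := by
      intro u v p
      induction p with
      | nil => exact id
      | @cons u w v h p ih =>
        intro hu
        apply ih
        rcases hu with rfl | hu
        · exact Or.inr h.symm
        · have huB : u ∈ B := (hbip u b₀ hu).mpr hb₀
          exact Or.inl (honly u huB w b₀ h hu)
    intro v
    exact (hconn b₀ v).elim fun p => key _ _ p (Or.inl rfl)
  -- distance three for non-incident point-block pairs
  have hd3 : ∀ x ∈ B, ∀ b ∈ Bᶜ, ¬ Γ.Adj x b → Γ.dist x b = 3 := by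
    intro x hx b hb hxb
    obtain ⟨C, ⟨hC, hbC⟩, hCu⟩ := hCuniq b hb
    have h2 : ∃ C' ∈ 𝓒, C' ≠ C := by
      by_contra hno
      push_neg at hno
      rcases hsingle C hC hno b hb x with rfl | h
      · exact hb hx
      · exact hxb h
    obtain ⟨C', hC', hCC'⟩ := h2
    obtain ⟨b₁, ⟨hb₁C', hxb₁⟩, -⟩ := hCcov C' hC' x hx
    have hnc := hμ C' hC' C hC hCC' b₁ hb₁C' b hbC
    obtain ⟨y, hyb₁, hyb⟩ := Set.nonempty_of_ncard_ne_zero (by rw [hnc]; omega)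
    have hle := SimpleGraph.dist_le
      (SimpleGraph.Walk.cons hxb₁ (SimpleGraph.Walk.cons hyb₁.symm
        (SimpleGraph.Walk.cons hyb SimpleGraph.Walk.nil)))
    simp only [SimpleGraph.Walk.length_cons, SimpleGraph.Walk.length_nil] at hle
    have hodd : ¬ Even (Γ.dist x b) := by
      rw [← aux_dist_parity hconn hbip x b]
      tauto
    rw [Nat.not_even_iff] at hodd
    have h1' : Γ.dist x b ≠ 1 := fun h => hxb (SimpleGraph.dist_eq_one_iff_adj.mp h)
    omega
  -- distance four for non-collinear point pairs
  have hd4p : ∀ x ∈ B, ∀ y ∈ B, x ≠ y →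
      ¬ (∃ b ∈ Bᶜ, Γ.Adj x b ∧ Γ.Adj y b) → Γ.dist x y = 4 := by
    intro x hx y hy hne hncol
    obtain ⟨b₀, hxb₀⟩ := hnbr x y hne
    have hb₀ : b₀ ∈ Bᶜ := hadjB hx hxb₀
    obtain ⟨C, ⟨hC, hb₀C⟩, -⟩ := hCuniq b₀ hb₀
    have h2 : ∃ C' ∈ 𝓒, C' ≠ C := by
      by_contra hno
      push_neg at hno
      rcases hsingle C hC hno b₀ hb₀ y with rfl | h
      · exact hb₀ hy
      · exact hncol ⟨b₀, hb₀, hxb₀, h⟩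
    obtain ⟨C', hC', hCC'⟩ := h2
    obtain ⟨by', ⟨hby'C, hyby'⟩, -⟩ := hCcov C hC y hy
    obtain ⟨b', ⟨hb'C', hxb'⟩, -⟩ := hCcov C' hC' x hx
    have hnc := hμ C' hC' C hC hCC' b' hb'C' by' hby'C
    obtain ⟨z, hzb', hzby'⟩ := Set.nonempty_of_ncard_ne_zero (by rw [hnc]; omega)
    have hle := SimpleGraph.dist_le
      (SimpleGraph.Walk.cons hxb' (SimpleGraph.Walk.cons hzb'.symm
        (SimpleGraph.Walk.cons hzby' (SimpleGraph.Walk.cons hyby'.symm SimpleGraph.Walk.nil))))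
    simp only [SimpleGraph.Walk.length_cons, SimpleGraph.Walk.length_nil] at hle
    have heven : Even (Γ.dist x y) := by
      rw [← aux_dist_parity hconn hbip x y]
      tauto
    rw [Nat.even_iff] at heven
    have h0 : Γ.dist x y ≠ 0 := fun h => hne (hconn.dist_eq_zero_iff.mp h)
    have h2' : Γ.dist x y ≠ 2 := by
      intro h
      obtain ⟨w, hxw, hwy⟩ := aux_dist_two h
      exact hncol ⟨w, hadjB hx hxw, hxw, hwy.symm⟩
    omega
  -- distance four for non-intersecting block pairs
  have hd4b : ∀ b ∈ Bᶜ, ∀ c ∈ Bᶜ, b ≠ c →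
      ¬ (∃ z ∈ B, Γ.Adj z b ∧ Γ.Adj z c) → Γ.dist b c = 4 := by
    intro b hb c hc hne hnint
    obtain ⟨Cb, ⟨hCb, hbCb⟩, -⟩ := hCuniq b hb
    obtain ⟨Cc, ⟨hCc, hcCc⟩, -⟩ := hCuniq c hc
    have hCbc : Cb = Cc := by
      by_contra hd
      have hnc := hμ Cb hCb Cc hCc hd b hbCb c hcCc
      obtain ⟨z, hzb, hzc⟩ := Set.nonempty_of_ncard_ne_zero (by rw [hnc]; omega)
      exact hnint ⟨z, hadjC hb hzb.symm, hzb, hzc⟩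
    subst hCbc
    obtain ⟨y, hby⟩ := hnbr b c hne
    have hyB : y ∈ B := hadjC hb hby
    have h2 : ∃ C' ∈ 𝓒, C' ≠ Cb := by
      by_contra hno
      push_neg at hno
      rcases hsingle Cb hCb hno b hb c with rfl | h
      · exact hne rfl
      · exact hnoCC hc hb h
    obtain ⟨C', hC', hCC'⟩ := h2
    obtain ⟨c₁, ⟨hc₁C', hyc₁⟩, -⟩ := hCcov C' hC' y hyB
    have hnc := hμ C' hC' Cb hCb hCC' c₁ hc₁C' c hcCc
    obtain ⟨z, hzc₁, hzc⟩ := Set.nonempty_of_ncard_ne_zero (by rw [hnc]; omega)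
    have hle := SimpleGraph.dist_le
      (SimpleGraph.Walk.cons hby (SimpleGraph.Walk.cons hyc₁
        (SimpleGraph.Walk.cons hzc₁.symm (SimpleGraph.Walk.cons hzc SimpleGraph.Walk.nil))))
    simp only [SimpleGraph.Walk.length_cons, SimpleGraph.Walk.length_nil] at hle
    have heven : Even (Γ.dist b c) := by
      rw [← aux_dist_parity hconn hbip b c]
      exact ⟨fun h => absurd h hb, fun h => absurd h hc⟩
    rw [Nat.even_iff] at heven
    have h0 : Γ.dist b c ≠ 0 := fun h => hne (hconn.dist_eq_zero_iff.mp h)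
    have h2' : Γ.dist b c ≠ 2 := by
      intro h
      obtain ⟨w, hbw, hwc⟩ := aux_dist_two h
      exact hnint ⟨w, hadjC hb hbw, hbw.symm, hwc⟩
    omega
  constructor
  · rintro ⟨hB, hBc, hStab⟩
    -- a mover combining transitivity and local distance transitivity
    have hmove : ∀ (a b a' b' : V) (i : ℕ), 1 ≤ i → i ≤ 4 →
        (∃ g ∈ G, g a = a') → Γ.dist a b = i → Γ.dist a' b' = i →
        ∃ g ∈ G, g a = a' ∧ g b = b' := by
      intro a b a' b' i hi1 hi4 ⟨g1, hg1G, hg1⟩ hab ha'b'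
      have e1 : Γ.dist a' (g1 b) = i := by
        rw [← hg1, aux_aut_dist hconn (hGaut g1 hg1G), hab]
      obtain ⟨g2, hg2G, hg2a, hg2b⟩ := hStab a' (g1 b) b' i hi1 hi4 e1 ha'b'
      refine ⟨g2 * g1, mul_mem hg2G hg1G, ?_, ?_⟩
      · rw [Equiv.Perm.mul_apply, hg1, hg2a]
      · rw [Equiv.Perm.mul_apply, hg2b]
    refine ⟨hGB, ?_, ?_, ?_, ?_, ?_, ?_⟩
    · -- flags
      rintro ⟨x, b⟩ ⟨hx, hb, hadj⟩ ⟨x', b'⟩ ⟨hx', hb', hadj'⟩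
      exact hmove x b x' b' 1 (by omega) (by omega) (hB x hx x' hx')
        (SimpleGraph.dist_eq_one_iff_adj.mpr hadj)
        (SimpleGraph.dist_eq_one_iff_adj.mpr hadj')
    · -- non-incident pairs
      rintro ⟨x, b⟩ ⟨hx, hb, hadj⟩ ⟨x', b'⟩ ⟨hx', hb', hadj'⟩
      exact hmove x b x' b' 3 (by omega) (by omega) (hB x hx x' hx')
        (hd3 x hx b hb hadj) (hd3 x' hx' b' hb' hadj')
    · -- collinear point pairs
      rintro ⟨x, y⟩ ⟨hx, hy, hne, b, hb, hxb, hyb⟩ ⟨x', y'⟩ ⟨hx', hy', hne', b', hb', hxb', hyb'⟩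
      exact hmove x y x' y' 2 (by omega) (by omega) (hB x hx x' hx')
        (hdist2 x b y hne (hnoBB hx hy) hxb hyb.symm)
        (hdist2 x' b' y' hne' (hnoBB hx' hy') hxb' hyb'.symm)
    · -- non-collinear point pairs
      rintro ⟨x, y⟩ ⟨hx, hy, hne, hncol⟩ ⟨x', y'⟩ ⟨hx', hy', hne', hncol'⟩
      exact hmove x y x' y' 4 (by omega) (by omega) (hB x hx x' hx')
        (hd4p x hx y hy hne hncol) (hd4p x' hx' y' hy' hne' hncol')
    · -- intersecting block pairs
      rintro ⟨b, c⟩ ⟨hb, hc, hne, z, hz, hzb, hzc⟩ ⟨b', c'⟩ ⟨hb', hc', hne', z', hz', hzb', hzc'⟩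
      exact hmove b c b' c' 2 (by omega) (by omega) (hBc b hb b' hb')
        (hdist2 b z c hne (hnoCC hb hc) hzb.symm hzc)
        (hdist2 b' z' c' hne' (hnoCC hb' hc') hzb'.symm hzc')
    · -- non-intersecting block pairs
      rintro ⟨b, c⟩ ⟨hb, hc, hne, hnint⟩ ⟨b', c'⟩ ⟨hb', hc', hne', hnint'⟩
      exact hmove b c b' c' 4 (by omega) (by omega) (hBc b hb b' hb')
        (hd4b b hb c hc hne hnint) (hd4b b' hb' c' hc' hne' hnint')
  · rintro ⟨-, hflag, hnon, hcol, hncol, hint, hnint⟩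
    refine ⟨?_, ?_, ?_⟩
    · intro x hx y hy
      by_cases hxy : x = y
      · exact ⟨1, one_mem G, by simp [hxy]⟩
      · obtain ⟨b, hxb⟩ := hnbr x y hxy
        obtain ⟨b', hyb'⟩ := hnbr y x (Ne.symm hxy)
        obtain ⟨g, hgG, hg1, -⟩ := hflag (x, b) ⟨hx, hadjB hx hxb, hxb⟩
          (y, b') ⟨hy, hadjB hy hyb', hyb'⟩
        exact ⟨g, hgG, hg1⟩
    · intro x hx y hy
      by_cases hxy : x = y
      · exact ⟨1, one_mem G, by simp [hxy]⟩
      · obtain ⟨w, hxw⟩ := hnbr x y hxy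
        obtain ⟨w', hyw'⟩ := hnbr y x (Ne.symm hxy)
        obtain ⟨g, hgG, -, hg2⟩ := hflag (w, x) ⟨hadjC hx hxw, hx, hxw.symm⟩
          (w', y) ⟨hadjC hy hyw', hy, hyw'.symm⟩
        exact ⟨g, hgG, hg2⟩
    · intro x y z i hi1 hi4 hdy hdz
      interval_cases i
      · -- i = 1
        have hy' := SimpleGraph.dist_eq_one_iff_adj.mp hdy
        have hz' := SimpleGraph.dist_eq_one_iff_adj.mp hdz
        by_cases hx : x ∈ B
        · obtain ⟨g, hgG, h1, h2⟩ := hflag (x, y) ⟨hx, hadjB hx hy', hy'⟩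
            (x, z) ⟨hx, hadjB hx hz', hz'⟩
          exact ⟨g, hgG, h1, h2⟩
        · obtain ⟨g, hgG, h1, h2⟩ := hflag (y, x) ⟨hadjC hx hy', hx, hy'.symm⟩
            (z, x) ⟨hadjC hx hz', hx, hz'.symm⟩
          exact ⟨g, hgG, h2, h1⟩
      · -- i = 2
        obtain ⟨w, hxw, hwy⟩ := aux_dist_two hdy
        obtain ⟨w', hxw', hw'z⟩ := aux_dist_two hdz
        have hney : x ≠ y := fun h => by rw [h, SimpleGraph.dist_self] at hdy; omega
        have hnez : x ≠ z := fun h => by rw [h, SimpleGraph.dist_self] at hdz; omega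
        have hsidey : (x ∈ B) ↔ (y ∈ B) :=
          (aux_dist_parity hconn hbip x y).mpr (by rw [hdy]; exact even_two)
        have hsidez : (x ∈ B) ↔ (z ∈ B) :=
          (aux_dist_parity hconn hbip x z).mpr (by rw [hdz]; exact even_two)
        by_cases hx : x ∈ B
        · obtain ⟨g, hgG, h1, h2⟩ := hcol (x, y)
            ⟨hx, hsidey.mp hx, hney, w, hadjB hx hxw, hxw, hwy.symm⟩
            (x, z) ⟨hx, hsidez.mp hx, hnez, w', hadjB hx hxw', hxw', hw'z.symm⟩
          exact ⟨g, hgG, h1, h2⟩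
        · have hxC : x ∈ Bᶜ := hx
          obtain ⟨g, hgG, h1, h2⟩ := hint (x, y)
            ⟨hxC, fun h => hx (hsidey.mpr h), hney, w, hadjC hxC hxw, hxw.symm, hwy⟩
            (x, z) ⟨hxC, fun h => hx (hsidez.mpr h), hnez, w', hadjC hxC hxw', hxw'.symm, hw'z⟩
          exact ⟨g, hgG, h1, h2⟩
      · -- i = 3
        have hnay : ¬ Γ.Adj x y := fun h => by
          rw [SimpleGraph.dist_eq_one_iff_adj.mpr h] at hdy; omega
        have hnaz : ¬ Γ.Adj x z := fun h => by
          rw [SimpleGraph.dist_eq_one_iff_adj.mpr h] at hdz; omega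
        have hsidey : ¬ ((x ∈ B) ↔ (y ∈ B)) := by
          rw [aux_dist_parity hconn hbip x y, hdy]
          decide
        have hsidez : ¬ ((x ∈ B) ↔ (z ∈ B)) := by
          rw [aux_dist_parity hconn hbip x z, hdz]
          decide
        by_cases hx : x ∈ B
        · obtain ⟨g, hgG, h1, h2⟩ := hnon (x, y) ⟨hx, fun h => hsidey ⟨fun _ => h, fun _ => hx⟩, hnay⟩
            (x, z) ⟨hx, fun h => hsidez ⟨fun _ => h, fun _ => hx⟩, hnaz⟩
          exact ⟨g, hgG, h1, h2⟩
        · have hyB : y ∈ B := by tauto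
          have hzB : z ∈ B := by tauto
          obtain ⟨g, hgG, h1, h2⟩ := hnon (y, x) ⟨hyB, hx, fun h => hnay h.symm⟩
            (z, x) ⟨hzB, hx, fun h => hnaz h.symm⟩
          exact ⟨g, hgG, h2, h1⟩
      · -- i = 4
        have hney : x ≠ y := fun h => by rw [h, SimpleGraph.dist_self] at hdy; omega
        have hnez : x ≠ z := fun h => by rw [h, SimpleGraph.dist_self] at hdz; omega
        have hcomy : ∀ w, ¬ (Γ.Adj x w ∧ Γ.Adj y w) := by
          rintro w ⟨h1, h2⟩
          have := hdist2 x w y hney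
          by_cases hna : Γ.Adj x y
          · rw [SimpleGraph.dist_eq_one_iff_adj.mpr hna] at hdy; omega
          · rw [this hna h1 h2.symm] at hdy; omega
        have hcomz : ∀ w, ¬ (Γ.Adj x w ∧ Γ.Adj z w) := by
          rintro w ⟨h1, h2⟩
          have := hdist2 x w z hnez
          by_cases hna : Γ.Adj x z
          · rw [SimpleGraph.dist_eq_one_iff_adj.mpr hna] at hdz; omega
          · rw [this hna h1 h2.symm] at hdz; omega
        have hsidey : (x ∈ B) ↔ (y ∈ B) :=
          (aux_dist_parity hconn hbip x y).mpr (by rw [hdy]; decide)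
        have hsidez : (x ∈ B) ↔ (z ∈ B) :=
          (aux_dist_parity hconn hbip x z).mpr (by rw [hdz]; decide)
        by_cases hx : x ∈ B
        · obtain ⟨g, hgG, h1, h2⟩ := hncol (x, y)
            ⟨hx, hsidey.mp hx, hney, fun ⟨b, _, h1, h2⟩ => hcomy b ⟨h1, h2⟩⟩
            (x, z) ⟨hx, hsidez.mp hx, hnez, fun ⟨b, _, h1, h2⟩ => hcomz b ⟨h1, h2⟩⟩
          exact ⟨g, hgG, h1, h2⟩
        · obtain ⟨g, hgG, h1, h2⟩ := hnint (x, y)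
            ⟨hx, fun h => hx (hsidey.mpr h), hney, fun ⟨w, _, h1, h2⟩ => hcomy w ⟨h1.symm, h2.symm⟩⟩
            (x, z) ⟨hx, fun h => hx (hsidez.mpr h), hnez, fun ⟨w, _, h1, h2⟩ => hcomz w ⟨h1.symm, h2.symm⟩⟩
          exact ⟨g, hgG, h1, h2⟩
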